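/- Generalized Chazy equation from a hypergeometric Picard–Fuchs equation: fix complex numbers α, β, γ and t* ≠ 0, and set P(t) = (α+β)/t + (1−α)/(t−t*) and Q(t) = [γ² − (1−α−β)²]·t*/(4t²(t−t*)). Let U ⊆ ℂ∖{0, t*} be open, let F₁, F₂ : U → ℂ be holomorphic with F₂ nonvanishing, both satisfying F″ + P·F′ + Q·F = 0 on U. Let Ω ⊆ ℂ be open and t : Ω → U holomorphic with F₁(t(τ))/F₂(t(τ)) = τ for all τ ∈ Ω. Define u(τ) = (d/dτ)F₂(t(τ)) / F₂(t(τ)), and u₄ = u̇ − u², u₆ = u̇₄ − 4uu₄, u₈ = u̇₆ − 6uu₆ (dots denoting d/dτ). Then on Ω: C₈₈·u₄²u₈² + C₈₆·u₄u₆²u₈ + C₈₄·u₄⁴u₈ + C₆₆·u₆⁴ + C₆₄·u₄³u₆² + C₄₄·u₄⁶ = 0, where C₈₈ = (2α−1)(2β−1)(α+β−γ−1)²(α+β+γ−1)², C₈₆ = −[(2α−1)(3β−1)+(3α−1)(2β−1)](α+β−γ−1)²(α+β+γ−1)², C₈₄ = −16(2α−1)(2β−1)(α+β−1)(α+β−γ−1)(α+β+γ−1),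 C₆₆ = (3α−1)(3β−1)(α+β−γ−1)²(α+β+γ−1)², C₆₄ = 4[2(2α−1)²(3β−1)+2(3α−1)(2β−1)²−3(α−β)²](α+β−γ−1)(α+β+γ−1), C₄₄ = 64(2α−1)(2β−1)(α+β−1)². -/

import Mathlib

open Complex

noncomputable section

/-- Coefficient C₈₈ of the generalized Chazy equation. -/
def C88 (α β γ : ℂ) : ℂ :=
  (2 * α - 1) * (2 * β - 1) * (α + β - γ - 1) ^ 2 * (α + β + γ - 1) ^ 2

/-- Coefficient C₈₆ of the generalized Chazy equation. -/
def C86 (α β γ : ℂ) : ℂ :=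
  -((2 * α - 1) * (3 * β - 1) + (3 * α - 1) * (2 * β - 1)) *
    (α + β - γ - 1) ^ 2 * (α + β + γ - 1) ^ 2

/-- Coefficient C₈₄ of the generalized Chazy equation. -/
def C84 (α β γ : ℂ) : ℂ :=
  -16 * (2 * α - 1) * (2 * β - 1) * (α + β - 1) * (α + β - γ - 1) * (α + β + γ - 1)

/-- Coefficient C₆₆ of the generalized Chazy equation. -/
def C66 (α β γ : ℂ) : ℂ :=
  (3 * α - 1) * (3 * β - 1) * (α + β - γ - 1) ^ 2 * (α + β + γ - 1) ^ 2

/-- Coefficient C₆₄ of the generalized Chazy equation. -/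
def C64 (α β γ : ℂ) : ℂ :=
  4 * (2 * (2 * α - 1) ^ 2 * (3 * β - 1) + 2 * (3 * α - 1) * (2 * β - 1) ^ 2 -
      3 * (α - β) ^ 2) * (α + β - γ - 1) * (α + β + γ - 1)

/-- Coefficient C₄₄ of the generalized Chazy equation. -/
def C44coef (α β : ℂ) : ℂ := 64 * (2 * α - 1) * (2 * β - 1) * (α + β - 1) ^ 2

set_option maxHeartbeats 1000000 in
lemma chazy_keypoly (a b c ts s T v4 v6 v8 Nb M : ℂ)
    (hNb : Nb = (1+2*a)*s - 2*ts - 2*(a+b)*(s-ts))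
    (hM : M = 12*s^2 - 16*s*ts + 6*ts^2 - 2*((a+b)*(s-ts)^2 + (1-a)*s^2)
      - 5*(3*s-2*ts)*((a+b)*(s-ts) + (1-a)*s) + 6*((a+b)*(s-ts) + (1-a)*s)^2)
    (h4 : v4 = -(c*ts)*T^2) (h6 : v6 = c*ts*Nb*T^3) (h8 : v8 = -(c*ts*M)*T^4) :
    16*((2*a-1)*(2*b-1)*c^2)*v4^2*v8^2
    + 16*(-((2*a-1)*(3*b-1)+(3*a-1)*(2*b-1))*c^2)*v4*v6^2*v8
    + 4*(s-ts)*(16*(2*a-1)*(2*b-1)*(a+b-1)*c)*v4^4*v8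
    + 16*((3*a-1)*(3*b-1)*c^2)*v6^4
    + 4*(s-ts)*(-(4*(2*(2*a-1)^2*(3*b-1)+2*(3*a-1)*(2*b-1)^2-3*(a-b)^2))*c)*v4^3*v6^2
    + (s-ts)^2*(64*(2*a-1)*(2*b-1)*(a+b-1)^2)*v4^6 = 0 := by
  subst h4 h6 h8 hNb hM
  ring

set_option maxHeartbeats 4000000

theorem generalized_chazy_from_hypergeometric
    (α β γ tstar : ℂ) (htstar : tstar ≠ 0)
    (P Q : ℂ → ℂ)
    (hP : ∀ t : ℂ, t ≠ 0 → t ≠ tstar →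
      P t = (α + β) / t + (1 - α) / (t - tstar))
    (hQ : ∀ t : ℂ, t ≠ 0 → t ≠ tstar →
      Q t = (γ ^ 2 - (1 - α - β) ^ 2) * tstar / (4 * t ^ 2 * (t - tstar)))
    (U : Set ℂ) (hUopen : IsOpen U) (hUsub : ∀ s ∈ U, s ≠ 0 ∧ s ≠ tstar)
    (F1 F2 : ℂ → ℂ)
    (hF1 : DifferentiableOn ℂ F1 U) (hF1' : DifferentiableOn ℂ (deriv F1) U)
    (hF2 : DifferentiableOn ℂ F2 U) (hF2' : DifferentiableOn ℂ (deriv F2) U)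
    (hF2ne : ∀ s ∈ U, F2 s ≠ 0)
    (hode1 : ∀ s ∈ U, deriv (deriv F1) s + P s * deriv F1 s + Q s * F1 s = 0)
    (hode2 : ∀ s ∈ U, deriv (deriv F2) s + P s * deriv F2 s + Q s * F2 s = 0)
    (Ω : Set ℂ) (hΩ : IsOpen Ω)
    (t : ℂ → ℂ) (ht : DifferentiableOn ℂ t Ω) (htU : ∀ τ ∈ Ω, t τ ∈ U)
    (hratio : ∀ τ ∈ Ω, F1 (t τ) / F2 (t τ) = τ)
    (u u4 u6 u8 : ℂ → ℂ)
    (hu : u = fun τ => deriv (fun σ => F2 (t σ)) τ / F2 (t τ))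
    (hu4 : u4 = fun τ => deriv u τ - u τ ^ 2)
    (hu6 : u6 = fun τ => deriv u4 τ - 4 * u τ * u4 τ)
    (hu8 : u8 = fun τ => deriv u6 τ - 6 * u τ * u6 τ) :
    ∀ τ ∈ Ω,
      C88 α β γ * u4 τ ^ 2 * u8 τ ^ 2 + C86 α β γ * u4 τ * u6 τ ^ 2 * u8 τ +
        C84 α β γ * u4 τ ^ 4 * u8 τ + C66 α β γ * u6 τ ^ 4 +
        C64 α β γ * u4 τ ^ 3 * u6 τ ^ 2 + C44coef α β * u4 τ ^ 6 = 0 := by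
  set c : ℂ := γ ^ 2 - (1 - α - β) ^ 2 with hc
  set p : ℂ → ℂ := fun s => (α + β) / s + (1 - α) / (s - tstar) with hp_def
  set p1 : ℂ → ℂ := fun s => -((α + β) / s ^ 2) - (1 - α) / (s - tstar) ^ 2 with hp1_def
  set q : ℂ → ℂ := fun s => c * tstar / (4 * s ^ 2 * (s - tstar)) with hq_def
  set q1 : ℂ → ℂ := fun s => -(c * tstar * (3 * s - 2 * tstar)) / (4 * s ^ 3 * (s - tstar) ^ 2)
    with hq1_def
  set q2 : ℂ → ℂ := fun s =>
    c * tstar * (12 * s ^ 2 - 16 * s * tstar + 6 * tstar ^ 2) / (4 * s ^ 4 * (s - tstar) ^ 3)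
    with hq2_def
  set wr : ℂ → ℂ := fun x => deriv F1 x * F2 x - F1 x * deriv F2 x with hwr_def
  set G : ℂ → ℂ := fun σ => F2 (t σ) ^ 2 / wr (t σ) with hG_def
  have hU0 : ∀ {s : ℂ}, s ∈ U → s ≠ 0 := fun hs => (hUsub _ hs).1
  have hUe : ∀ {s : ℂ}, s ∈ U → s - tstar ≠ 0 := fun hs => sub_ne_zero.mpr (hUsub _ hs).2
  have hF1at : ∀ s ∈ U, HasDerivAt F1 (deriv F1 s) s :=
    fun s hs => (hF1.differentiableAt (hUopen.mem_nhds hs)).hasDerivAt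
  have hF2at : ∀ s ∈ U, HasDerivAt F2 (deriv F2 s) s :=
    fun s hs => (hF2.differentiableAt (hUopen.mem_nhds hs)).hasDerivAt
  have hdF1at : ∀ s ∈ U, HasDerivAt (deriv F1) (deriv (deriv F1) s) s :=
    fun s hs => (hF1'.differentiableAt (hUopen.mem_nhds hs)).hasDerivAt
  have hdF2at : ∀ s ∈ U, HasDerivAt (deriv F2) (deriv (deriv F2) s) s :=
    fun s hs => (hF2'.differentiableAt (hUopen.mem_nhds hs)).hasDerivAt
  have hd2F1 : ∀ s ∈ U, deriv (deriv F1) s = -(p s * deriv F1 s + q s * F1 s) := by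
    intro s hs
    have h := hode1 s hs
    rw [hP s (hU0 hs) (hUsub s hs).2, hQ s (hU0 hs) (hUsub s hs).2] at h
    simp only [hp_def, hq_def]
    linear_combination h
  have hd2F2 : ∀ s ∈ U, deriv (deriv F2) s = -(p s * deriv F2 s + q s * F2 s) := by
    intro s hs
    have h := hode2 s hs
    rw [hP s (hU0 hs) (hUsub s hs).2, hQ s (hU0 hs) (hUsub s hs).2] at h
    simp only [hp_def, hq_def]
    linear_combination h
  -- derivatives of the explicit rational functions
  have hpD : ∀ s ∈ U, HasDerivAt p (p1 s) s := by
    intro s hs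
    have h0 := hU0 hs; have he := hUe hs
    have h1 : HasDerivAt (fun x : ℂ => (α + β) / x) ((0 * s - (α + β) * 1) / s ^ 2) s :=
      (hasDerivAt_const s (α + β)).div (hasDerivAt_id s) h0
    have h2 : HasDerivAt (fun x : ℂ => (1 - α) / (x - tstar))
        ((0 * (s - tstar) - (1 - α) * 1) / (s - tstar) ^ 2) s :=
      (hasDerivAt_const s (1 - α)).div ((hasDerivAt_id s).sub_const tstar) he
    have h3 := h1.add h2
    refine h3.congr_deriv ?_
    simp only [hp1_def]
    field_simp
    try ring
  have hqD : ∀ s ∈ U, HasDerivAt q (q1 s) s := by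
    intro s hs
    have h0 := hU0 hs; have he := hUe hs
    have hden : HasDerivAt (fun x : ℂ => 4 * x ^ 2 * (x - tstar))
        ((4 * (↑2 * s ^ 1)) * (s - tstar) + 4 * s ^ 2 * 1) s :=
      (((hasDerivAt_pow 2 s).const_mul 4).mul ((hasDerivAt_id s).sub_const tstar))
    have hdne : 4 * s ^ 2 * (s - tstar) ≠ 0 :=
      mul_ne_zero (mul_ne_zero (by norm_num) (pow_ne_zero 2 h0)) he
    have h := (hasDerivAt_const s (c * tstar)).div hden hdne
    refine h.congr_deriv ?_
    simp only [hq1_def]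
    field_simp
    ring
  have hq1D : ∀ s ∈ U, HasDerivAt q1 (q2 s) s := by
    intro s hs
    have h0 := hU0 hs; have he := hUe hs
    have hnum : HasDerivAt (fun x : ℂ => -(c * tstar * (3 * x - 2 * tstar)))
        (-(c * tstar * (3 * 1))) s :=
      ((((hasDerivAt_id s).const_mul 3).sub_const (2 * tstar)).const_mul (c * tstar)).neg
    have hden : HasDerivAt (fun x : ℂ => 4 * x ^ 3 * (x - tstar) ^ 2)
        ((4 * (↑3 * s ^ 2)) * (s - tstar) ^ 2 +
          4 * s ^ 3 * (↑2 * (s - tstar) ^ 1 * 1)) s :=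
      ((hasDerivAt_pow 3 s).const_mul 4).mul (((hasDerivAt_id s).sub_const tstar).pow 2)
    have hdne : 4 * s ^ 3 * (s - tstar) ^ 2 ≠ 0 :=
      mul_ne_zero (mul_ne_zero (by norm_num) (pow_ne_zero 3 h0)) (pow_ne_zero 2 he)
    have h := hnum.div hden hdne
    refine h.congr_deriv ?_
    simp only [hq2_def]
    field_simp
    ring
  have hwrD : ∀ s ∈ U, HasDerivAt wr (-(p s) * wr s) s := by
    intro s hs
    have h := ((hdF1at s hs).mul (hF2at s hs)).sub ((hF1at s hs).mul (hdF2at s hs))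
    refine h.congr_deriv ?_
    rw [hd2F1 s hs, hd2F2 s hs]
    simp only [hwr_def]
    ring
  -- basic facts about t and G
  have htD : ∀ τ ∈ Ω, HasDerivAt t (deriv t τ) τ :=
    fun τ hτ => (ht.differentiableAt (hΩ.mem_nhds hτ)).hasDerivAt
  have hF2t : ∀ τ ∈ Ω, HasDerivAt (fun σ => F2 (t σ)) (deriv F2 (t τ) * deriv t τ) τ :=
    fun τ hτ => (hF2at _ (htU τ hτ)).comp τ (htD τ hτ)
  have hTW : ∀ τ ∈ Ω, deriv t τ * wr (t τ) = F2 (t τ) ^ 2 := by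
    intro τ hτ
    have hs := htU τ hτ
    have hb := hF2ne _ hs
    have h1 : HasDerivAt (fun σ => F1 (t σ)) (deriv F1 (t τ) * deriv t τ) τ :=
      (hF1at _ hs).comp τ (htD τ hτ)
    have h3 := h1.div (hF2t τ hτ) hb
    have h4 : HasDerivAt (fun σ => F1 (t σ) / F2 (t σ)) 1 τ := by
      apply (hasDerivAt_id τ).congr_of_eventuallyEq
      filter_upwards [hΩ.mem_nhds hτ] with σ hσ
      exact hratio σ hσ
    have h5 := h3.unique h4
    simp only [hwr_def]
    have hb2 : F2 (t τ) ^ 2 ≠ 0 := pow_ne_zero 2 hb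
    field_simp at h5
    linear_combination h5
  have hWne : ∀ τ ∈ Ω, wr (t τ) ≠ 0 := by
    intro τ hτ h0
    have h := hTW τ hτ
    rw [h0, mul_zero] at h
    exact pow_ne_zero 2 (hF2ne _ (htU τ hτ)) h.symm
  have hGT : ∀ τ ∈ Ω, deriv t τ = G τ := by
    intro τ hτ
    simp only [hG_def]
    rw [eq_div_iff (hWne τ hτ)]
    exact hTW τ hτ
  have hGD : ∀ τ ∈ Ω,
      HasDerivAt G (G τ ^ 2 * (2 * deriv F2 (t τ) / F2 (t τ) + p (t τ))) τ := by
    intro τ hτ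
    have hs := htU τ hτ
    have hb := hF2ne _ hs
    have hW := hWne τ hτ
    have hnum : HasDerivAt (fun σ => F2 (t σ) ^ 2)
        (↑2 * F2 (t τ) ^ 1 * (deriv F2 (t τ) * deriv t τ)) τ := (hF2t τ hτ).pow 2
    have hden : HasDerivAt (fun σ => wr (t σ)) (-(p (t τ)) * wr (t τ) * deriv t τ) τ :=
      (hwrD _ hs).comp τ (htD τ hτ)
    have h : HasDerivAt G
        ((↑2 * F2 (t τ) ^ 1 * (deriv F2 (t τ) * deriv t τ) * wr (t τ) -
          F2 (t τ) ^ 2 * (-(p (t τ)) * wr (t τ) * deriv t τ)) / wr (t τ) ^ 2) τ := by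
      simp only [hG_def]
      exact hnum.div hden hW
    convert h using 1
    rw [hGT τ hτ]
    simp only [hG_def]
    field_simp
    ring
  have huval : ∀ τ ∈ Ω, u τ = deriv F2 (t τ) * G τ / F2 (t τ) := by
    intro τ hτ
    simp only [hu]
    rw [(hF2t τ hτ).deriv, hGT τ hτ]
  have hu4val : ∀ τ ∈ Ω, u4 τ = -q (t τ) * G τ ^ 2 := by
    intro τ hτ
    have hs := htU τ hτ
    have hb := hF2ne _ hs
    have h2' : HasDerivAt (fun σ => deriv F2 (t σ)) (deriv (deriv F2) (t τ) * deriv t τ) τ :=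
      (hdF2at _ hs).comp τ (htD τ hτ)
    have hG' := hGD τ hτ
    have hUexp : HasDerivAt (fun σ => deriv F2 (t σ) * G σ / F2 (t σ))
        (((deriv (deriv F2) (t τ) * deriv t τ * G τ +
          deriv F2 (t τ) * (G τ ^ 2 * (2 * deriv F2 (t τ) / F2 (t τ) + p (t τ)))) * F2 (t τ) -
          deriv F2 (t τ) * G τ * (deriv F2 (t τ) * deriv t τ)) / F2 (t τ) ^ 2) τ :=
      (h2'.mul hG').div (hF2t τ hτ) hb
    have huD : HasDerivAt u
        (((deriv (deriv F2) (t τ) * deriv t τ * G τ +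
          deriv F2 (t τ) * (G τ ^ 2 * (2 * deriv F2 (t τ) / F2 (t τ) + p (t τ)))) * F2 (t τ) -
          deriv F2 (t τ) * G τ * (deriv F2 (t τ) * deriv t τ)) / F2 (t τ) ^ 2) τ := by
      apply hUexp.congr_of_eventuallyEq
      filter_upwards [hΩ.mem_nhds hτ] with σ hσ
      exact huval σ hσ
    rw [hu4]
    simp only
    rw [huD.deriv, huval τ hτ, hGT τ hτ, hd2F2 _ hs]
    field_simp
    ring
  have hu6val : ∀ τ ∈ Ω, u6 τ = -(q1 (t τ) + 2 * p (t τ) * q (t τ)) * G τ ^ 3 := by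
    intro τ hτ
    have hs := htU τ hτ
    have hb := hF2ne _ hs
    have hqt : HasDerivAt (fun σ => q (t σ)) (q1 (t τ) * deriv t τ) τ :=
      (hqD _ hs).comp τ (htD τ hτ)
    have hG' := hGD τ hτ
    have h4exp : HasDerivAt (fun σ => -q (t σ) * G σ ^ 2)
        (-(q1 (t τ) * deriv t τ) * G τ ^ 2 +
          -q (t τ) * (↑2 * G τ ^ 1 *
            (G τ ^ 2 * (2 * deriv F2 (t τ) / F2 (t τ) + p (t τ))))) τ :=
      hqt.neg.mul (hG'.pow 2)
    have h4D : HasDerivAt u4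
        (-(q1 (t τ) * deriv t τ) * G τ ^ 2 +
          -q (t τ) * (↑2 * G τ ^ 1 *
            (G τ ^ 2 * (2 * deriv F2 (t τ) / F2 (t τ) + p (t τ))))) τ := by
      apply h4exp.congr_of_eventuallyEq
      filter_upwards [hΩ.mem_nhds hτ] with σ hσ
      exact hu4val σ hσ
    rw [hu6]
    simp only
    rw [h4D.deriv, huval τ hτ, hu4val τ hτ, hGT τ hτ]
    field_simp
    ring
  have hu8val : ∀ τ ∈ Ω, u8 τ =
      -(q2 (t τ) + 2 * p1 (t τ) * q (t τ) + 5 * p (t τ) * q1 (t τ) +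
        6 * p (t τ) ^ 2 * q (t τ)) * G τ ^ 4 := by
    intro τ hτ
    have hs := htU τ hτ
    have hb := hF2ne _ hs
    have hqt : HasDerivAt (fun σ => q (t σ)) (q1 (t τ) * deriv t τ) τ :=
      (hqD _ hs).comp τ (htD τ hτ)
    have hq1t : HasDerivAt (fun σ => q1 (t σ)) (q2 (t τ) * deriv t τ) τ :=
      (hq1D _ hs).comp τ (htD τ hτ)
    have hpt : HasDerivAt (fun σ => p (t σ)) (p1 (t τ) * deriv t τ) τ :=
      (hpD _ hs).comp τ (htD τ hτ)
    have hG' := hGD τ hτ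
    have hin : HasDerivAt (fun σ => q1 (t σ) + 2 * p (t σ) * q (t σ))
        (q2 (t τ) * deriv t τ +
          ((2 * (p1 (t τ) * deriv t τ)) * q (t τ) +
            2 * p (t τ) * (q1 (t τ) * deriv t τ))) τ :=
      hq1t.add (((hpt.const_mul 2)).mul hqt)
    have h6exp : HasDerivAt (fun σ => -(q1 (t σ) + 2 * p (t σ) * q (t σ)) * G σ ^ 3)
        (-(q2 (t τ) * deriv t τ +
          ((2 * (p1 (t τ) * deriv t τ)) * q (t τ) +
            2 * p (t τ) * (q1 (t τ) * deriv t τ))) * G τ ^ 3 +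
          -(q1 (t τ) + 2 * p (t τ) * q (t τ)) *
            (↑3 * G τ ^ 2 * (G τ ^ 2 * (2 * deriv F2 (t τ) / F2 (t τ) + p (t τ))))) τ :=
      hin.neg.mul (hG'.pow 3)
    have h6D : HasDerivAt u6
        (-(q2 (t τ) * deriv t τ +
          ((2 * (p1 (t τ) * deriv t τ)) * q (t τ) +
            2 * p (t τ) * (q1 (t τ) * deriv t τ))) * G τ ^ 3 +
          -(q1 (t τ) + 2 * p (t τ) * q (t τ)) *
            (↑3 * G τ ^ 2 * (G τ ^ 2 * (2 * deriv F2 (t τ) / F2 (t τ) + p (t τ))))) τ := by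
      apply h6exp.congr_of_eventuallyEq
      filter_upwards [hΩ.mem_nhds hτ] with σ hσ
      exact hu6val σ hσ
    rw [hu8]
    simp only
    rw [h6D.deriv, huval τ hτ, hu6val τ hτ, hGT τ hτ]
    field_simp
    ring
  -- final assembly
  intro τ hτ
  have hs := htU τ hτ
  have h0 : t τ ≠ 0 := hU0 hs
  have he : t τ - tstar ≠ 0 := hUe hs
  have hV4 : 4 * (t τ) ^ 2 * (t τ - tstar) * u4 τ = -(c * tstar) * G τ ^ 2 := by
    rw [hu4val τ hτ]
    simp only [hq_def]
    field_simp
  have hd2 : 4 * (t τ) ^ 2 * (t τ - tstar) ≠ 0 :=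
    mul_ne_zero (mul_ne_zero (by norm_num) (pow_ne_zero 2 h0)) he
  have hd3 : 4 * (t τ) ^ 3 * (t τ - tstar) ^ 2 ≠ 0 :=
    mul_ne_zero (mul_ne_zero (by norm_num) (pow_ne_zero 3 h0)) (pow_ne_zero 2 he)
  have hd4 : 4 * (t τ) ^ 4 * (t τ - tstar) ^ 3 ≠ 0 :=
    mul_ne_zero (mul_ne_zero (by norm_num) (pow_ne_zero 4 h0)) (pow_ne_zero 3 he)
  have hqc : q (t τ) * (4 * (t τ) ^ 2 * (t τ - tstar)) = c * tstar := by
    simp only [hq_def]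
    exact div_mul_cancel₀ _ hd2
  have hq1c : q1 (t τ) * (4 * (t τ) ^ 3 * (t τ - tstar) ^ 2) =
      -(c * tstar * (3 * (t τ) - 2 * tstar)) := by
    simp only [hq1_def]
    exact div_mul_cancel₀ _ hd3
  have hq2c : q2 (t τ) * (4 * (t τ) ^ 4 * (t τ - tstar) ^ 3) =
      c * tstar * (12 * (t τ) ^ 2 - 16 * (t τ) * tstar + 6 * tstar ^ 2) := by
    simp only [hq2_def]
    exact div_mul_cancel₀ _ hd4
  have hpc : p (t τ) * ((t τ) * (t τ - tstar)) =
      (α + β) * (t τ - tstar) + (1 - α) * (t τ) := by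
    simp only [hp_def]
    field_simp
    try ring
  have hp1c : p1 (t τ) * ((t τ) ^ 2 * (t τ - tstar) ^ 2) =
      -((α + β) * (t τ - tstar) ^ 2 + (1 - α) * (t τ) ^ 2) := by
    simp only [hp1_def]
    field_simp
    try ring
  have hV6 : 4 * (t τ) ^ 3 * (t τ - tstar) ^ 2 * u6 τ =
      c * tstar * ((1 + 2 * α) * (t τ) - 2 * tstar - 2 * (α + β) * (t τ - tstar)) *
        G τ ^ 3 := by
    rw [hu6val τ hτ]
    linear_combination (-(G τ ^ 3)) * hq1c +
      (-2 * G τ ^ 3 * (q (t τ) * (4 * (t τ) ^ 2 * (t τ - tstar)))) * hpc +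
      (-2 * G τ ^ 3 * ((α + β) * (t τ - tstar) + (1 - α) * (t τ))) * hqc
  have hV8 : 4 * (t τ) ^ 4 * (t τ - tstar) ^ 3 * u8 τ =
      -(c * tstar * (12 * (t τ) ^ 2 - 16 * (t τ) * tstar + 6 * tstar ^ 2
        - 2 * ((α + β) * (t τ - tstar) ^ 2 + (1 - α) * (t τ) ^ 2)
        - 5 * (3 * (t τ) - 2 * tstar) * ((α + β) * (t τ - tstar) + (1 - α) * (t τ))
        + 6 * ((α + β) * (t τ - tstar) + (1 - α) * (t τ)) ^ 2)) * G τ ^ 4 := by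
    rw [hu8val τ hτ]
    linear_combination (-(G τ ^ 4)) * hq2c +
      (-2 * G τ ^ 4 * (q (t τ) * (4 * (t τ) ^ 2 * (t τ - tstar)))) * hp1c +
      (-2 * G τ ^ 4 * (-((α + β) * (t τ - tstar) ^ 2 + (1 - α) * (t τ) ^ 2)) -
        6 * G τ ^ 4 * ((α + β) * (t τ - tstar) + (1 - α) * (t τ)) ^ 2) * hqc +
      (-5 * G τ ^ 4 * (p (t τ) * ((t τ) * (t τ - tstar)))) * hq1c +
      (-5 * G τ ^ 4 * (-(c * tstar * (3 * (t τ) - 2 * tstar))) -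
        6 * G τ ^ 4 * (p (t τ) * ((t τ) * (t τ - tstar))) *
          (q (t τ) * (4 * (t τ) ^ 2 * (t τ - tstar))) -
        6 * G τ ^ 4 * ((α + β) * (t τ - tstar) + (1 - α) * (t τ)) *
          (q (t τ) * (4 * (t τ) ^ 2 * (t τ - tstar)))) * hpc
  have hc88 : C88 α β γ = (2 * α - 1) * (2 * β - 1) * c ^ 2 := by
    simp only [C88, hc]; ring
  have hc86 : C86 α β γ = -((2 * α - 1) * (3 * β - 1) + (3 * α - 1) * (2 * β - 1)) * c ^ 2 := by
    simp only [C86, hc]; ring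
  have hc84 : C84 α β γ = 16 * (2 * α - 1) * (2 * β - 1) * (α + β - 1) * c := by
    simp only [C84, hc]; ring
  have hc66 : C66 α β γ = (3 * α - 1) * (3 * β - 1) * c ^ 2 := by
    simp only [C66, hc]; ring
  have hc64 : C64 α β γ =
      -(4 * (2 * (2 * α - 1) ^ 2 * (3 * β - 1) + 2 * (3 * α - 1) * (2 * β - 1) ^ 2 -
        3 * (α - β) ^ 2)) * c := by
    simp only [C64, hc]; ring
  have hkey := chazy_keypoly α β c tstar (t τ) (G τ)
    (-(c * tstar) * G τ ^ 2)
    (c * tstar * ((1 + 2 * α) * (t τ) - 2 * tstar - 2 * (α + β) * (t τ - tstar)) * G τ ^ 3)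
    (-(c * tstar * (12 * (t τ) ^ 2 - 16 * (t τ) * tstar + 6 * tstar ^ 2
        - 2 * ((α + β) * (t τ - tstar) ^ 2 + (1 - α) * (t τ) ^ 2)
        - 5 * (3 * (t τ) - 2 * tstar) * ((α + β) * (t τ - tstar) + (1 - α) * (t τ))
        + 6 * ((α + β) * (t τ - tstar) + (1 - α) * (t τ)) ^ 2)) * G τ ^ 4)
    ((1 + 2 * α) * (t τ) - 2 * tstar - 2 * (α + β) * (t τ - tstar))
    (12 * (t τ) ^ 2 - 16 * (t τ) * tstar + 6 * tstar ^ 2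
        - 2 * ((α + β) * (t τ - tstar) ^ 2 + (1 - α) * (t τ) ^ 2)
        - 5 * (3 * (t τ) - 2 * tstar) * ((α + β) * (t τ - tstar) + (1 - α) * (t τ))
        + 6 * ((α + β) * (t τ - tstar) + (1 - α) * (t τ)) ^ 2)
    rfl rfl rfl rfl rfl
  have hbig : 4096 * (t τ) ^ 12 * (t τ - tstar) ^ 8 *
      (C88 α β γ * u4 τ ^ 2 * u8 τ ^ 2 + C86 α β γ * u4 τ * u6 τ ^ 2 * u8 τ +
        C84 α β γ * u4 τ ^ 4 * u8 τ + C66 α β γ * u6 τ ^ 4 +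
        C64 α β γ * u4 τ ^ 3 * u6 τ ^ 2 + C44coef α β * u4 τ ^ 6) = 0 := by
    have hexp : 4096 * (t τ) ^ 12 * (t τ - tstar) ^ 8 *
        (C88 α β γ * u4 τ ^ 2 * u8 τ ^ 2 + C86 α β γ * u4 τ * u6 τ ^ 2 * u8 τ +
          C84 α β γ * u4 τ ^ 4 * u8 τ + C66 α β γ * u6 τ ^ 4 +
          C64 α β γ * u4 τ ^ 3 * u6 τ ^ 2 + C44coef α β * u4 τ ^ 6)
        = 16 * ((2 * α - 1) * (2 * β - 1) * c ^ 2) *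
            (4 * (t τ) ^ 2 * (t τ - tstar) * u4 τ) ^ 2 *
            (4 * (t τ) ^ 4 * (t τ - tstar) ^ 3 * u8 τ) ^ 2
        + 16 * (-((2 * α - 1) * (3 * β - 1) + (3 * α - 1) * (2 * β - 1)) * c ^ 2) *
            (4 * (t τ) ^ 2 * (t τ - tstar) * u4 τ) *
            (4 * (t τ) ^ 3 * (t τ - tstar) ^ 2 * u6 τ) ^ 2 *
            (4 * (t τ) ^ 4 * (t τ - tstar) ^ 3 * u8 τ)
        + 4 * (t τ - tstar) * (16 * (2 * α - 1) * (2 * β - 1) * (α + β - 1) * c) *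
            (4 * (t τ) ^ 2 * (t τ - tstar) * u4 τ) ^ 4 *
            (4 * (t τ) ^ 4 * (t τ - tstar) ^ 3 * u8 τ)
        + 16 * ((3 * α - 1) * (3 * β - 1) * c ^ 2) *
            (4 * (t τ) ^ 3 * (t τ - tstar) ^ 2 * u6 τ) ^ 4
        + 4 * (t τ - tstar) *
            (-(4 * (2 * (2 * α - 1) ^ 2 * (3 * β - 1) + 2 * (3 * α - 1) * (2 * β - 1) ^ 2 -
              3 * (α - β) ^ 2)) * c) *
            (4 * (t τ) ^ 2 * (t τ - tstar) * u4 τ) ^ 3 *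
            (4 * (t τ) ^ 3 * (t τ - tstar) ^ 2 * u6 τ) ^ 2
        + (t τ - tstar) ^ 2 * (64 * (2 * α - 1) * (2 * β - 1) * (α + β - 1) ^ 2) *
            (4 * (t τ) ^ 2 * (t τ - tstar) * u4 τ) ^ 6 := by
      rw [hc88, hc86, hc84, hc66, hc64]
      simp only [C44coef]
      ring
    rw [hexp, hV4, hV6, hV8]
    exact hkey
  have hne : (4096 : ℂ) * (t τ) ^ 12 * (t τ - tstar) ^ 8 ≠ 0 :=
    mul_ne_zero (mul_ne_zero (by norm_num) (pow_ne_zero 12 h0)) (pow_ne_zero 8 he)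
  exact (mul_eq_zero.mp hbig).resolve_left hne
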